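/- Suppose the perishing times T_1,...,T_T are independent and ν_t := E[P_{<t}] ≤ t − 1 for every t ∈ {2,...,T}. Then P(P_{<t} ≤ t − 1 for all t ∈ {2,...,T}) ≥ 1 − Σ_{t=2}^T min{ Var(P_{<t})/(t − ν_t)², exp(−2(t − ν_t)²/|B^rand_{<t}|) } · 1{B^rand_{<t} ≠ ∅}. In particular the process is δ-offset-expiring for every δ at least this sum. -/

import Mathlib

open MeasureTheory ProbabilityTheory Finset
open scoped Classical

section Aux

lemma stmt9Dpos {p : ℝ} (hp0 : 0 ≤ p) (hp1 : p ≤ 1) (y : ℝ) : 0 < 1 - p + p * Real.exp y := by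
  rcases eq_or_lt_of_le hp1 with h | h
  · subst h; simpa using Real.exp_pos y
  · have : 0 ≤ p * Real.exp y := mul_nonneg hp0 (Real.exp_pos y).le
    linarith

lemma stmt9_bern_bound {p : ℝ} (hp0 : 0 ≤ p) (hp1 : p ≤ 1) {x : ℝ} (hx : 0 ≤ x) :
    1 - p + p * Real.exp x ≤ Real.exp (x * p + x ^ 2 / 8) := by
  set D : ℝ → ℝ := fun y => 1 - p + p * Real.exp y with hD
  have hDpos : ∀ y, 0 < D y := stmt9Dpos hp0 hp1
  have hDderiv : ∀ y, HasDerivAt D (p * Real.exp y) y := by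
    intro y
    simpa [hD] using ((Real.hasDerivAt_exp y).const_mul p).const_add (1 - p)
  have hqle : ∀ y, p * Real.exp y ≤ D y := fun y => by simp [hD]; linarith
  have hqderiv : ∀ y, HasDerivAt (fun z => p * Real.exp z / D z)
      ((p * Real.exp y * D y - p * Real.exp y * (p * Real.exp y)) / D y ^ 2) y := by
    intro y
    exact (((Real.hasDerivAt_exp y).const_mul p)).div (hDderiv y) (hDpos y).ne'
  set φ : ℝ → ℝ := fun y => y / 4 + p - p * Real.exp y / D y with hφ
  have hφderiv : ∀ y, HasDerivAt φ
      (1 / 4 - (p * Real.exp y * D y - p * Real.exp y * (p * Real.exp y)) / D y ^ 2) y := by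
    intro y
    have h1 : HasDerivAt (fun z : ℝ => z / 4 + p) (1 / 4) y := by
      simpa using (hasDerivAt_id y).div_const 4 |>.add_const p
    exact h1.sub (hqderiv y)
  have hφnonneg : ∀ y,
      0 ≤ 1 / 4 - (p * Real.exp y * D y - p * Real.exp y * (p * Real.exp y)) / D y ^ 2 := by
    intro y
    have key : ∀ d e : ℝ, 0 < d → (e * d - e * e) / d ^ 2 ≤ 1 / 4 := by
      intro d e hd
      rw [div_le_iff₀ (pow_pos hd 2)]
      nlinarith [sq_nonneg (d - 2 * e)]
    have := key (D y) (p * Real.exp y) (hDpos y)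
    linarith
  have hφmono : MonotoneOn φ (Set.Ici (0:ℝ)) := by
    apply monotoneOn_of_deriv_nonneg (convex_Ici 0)
    · exact fun y _ => (hφderiv y).continuousAt.continuousWithinAt
    · exact fun y _ => ((hφderiv y).differentiableAt).differentiableWithinAt
    · intro y _
      rw [(hφderiv y).deriv]
      exact hφnonneg y
  have hφ0 : φ 0 = 0 := by simp [hφ, hD]
  have hφpos : ∀ y, 0 ≤ y → 0 ≤ φ y := by
    intro y hy
    have := hφmono (Set.self_mem_Ici) hy hy
    rw [hφ0] at this; exact this
  set ψ : ℝ → ℝ := fun y => y ^ 2 / 8 + y * p - Real.log (D y) with hψ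
  have hψderiv : ∀ y, HasDerivAt ψ (y / 4 + p - p * Real.exp y / D y) y := by
    intro y
    have h1 : HasDerivAt (fun z : ℝ => z ^ 2 / 8 + z * p) (y / 4 + p) y := by
      have := ((hasDerivAt_pow 2 y).div_const 8).add ((hasDerivAt_id y).mul_const p)
      refine this.congr_deriv ?_
      ring
    have h2 : HasDerivAt (fun z => Real.log (D z)) (p * Real.exp y / D y) y :=
      (hDderiv y).log (hDpos y).ne'
    exact h1.sub h2
  have hψmono : MonotoneOn ψ (Set.Ici (0:ℝ)) := by
    apply monotoneOn_of_deriv_nonneg (convex_Ici 0)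
    · exact fun y _ => (hψderiv y).continuousAt.continuousWithinAt
    · exact fun y _ => ((hψderiv y).differentiableAt).differentiableWithinAt
    · intro y hy
      rw [(hψderiv y).deriv]
      exact hφpos y (le_of_lt (by simpa using hy))
  have hψ0 : ψ 0 = 0 := by simp [hψ, hD]
  have hψx : 0 ≤ ψ x := by
    have := hψmono Set.self_mem_Ici hx hx
    rwa [hψ0] at this
  have hlog : Real.log (D x) ≤ x * p + x ^ 2 / 8 := by
    simp only [hψ, sub_nonneg] at hψx
    linarith
  calc D x = Real.exp (Real.log (D x)) := (Real.exp_log (hDpos x)).symm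
    _ ≤ Real.exp (x * p + x ^ 2 / 8) := Real.exp_le_exp.2 hlog

lemma stmt9_exp_eq {Ω : Type*} (P : Ω → Prop) [DecidablePred P] (p l : ℝ) :
    (fun ω => Real.exp (l * ((if P ω then (1:ℝ) else 0) - p))) =
    (fun ω => Real.exp (l * (0 - p)) +
      (Real.exp (l * (1 - p)) - Real.exp (l * (0 - p))) *
        Set.indicator {ω | P ω} (fun _ => (1:ℝ)) ω) := by
  funext ω
  by_cases h : P ω
  · simp only [if_pos h, Set.indicator_of_mem (show ω ∈ {ω | P ω} from h), mul_one]
    ring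
  · simp [Set.indicator_apply, Set.mem_setOf_eq, h]

lemma stmt9_integrable {Ω : Type*} [MeasurableSpace Ω] (μ : Measure Ω) [IsProbabilityMeasure μ]
    (P : Ω → Prop) [DecidablePred P] (hP : MeasurableSet {ω | P ω}) (p l : ℝ) :
    Integrable (fun ω => Real.exp (l * ((if P ω then (1:ℝ) else 0) - p))) μ := by
  rw [stmt9_exp_eq]
  exact (integrable_const _).add (((integrable_const (1:ℝ)).indicator hP).const_mul _)

lemma stmt9_mgf {Ω : Type*} [MeasurableSpace Ω] (μ : Measure Ω) [IsProbabilityMeasure μ]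
    (P : Ω → Prop) [DecidablePred P] (hP : MeasurableSet {ω | P ω}) (l : ℝ) :
    mgf (fun ω => (if P ω then (1:ℝ) else 0) - (μ {ω | P ω}).toReal) μ l
      = Real.exp (-(l * (μ {ω | P ω}).toReal)) *
        (1 - (μ {ω | P ω}).toReal + (μ {ω | P ω}).toReal * Real.exp l) := by
  set p := (μ {ω | P ω}).toReal with hp
  have h0 : mgf (fun ω => (if P ω then (1:ℝ) else 0) - p) μ l
      = ∫ ω, Real.exp (l * ((if P ω then (1:ℝ) else 0) - p)) ∂μ := rfl
  have hint2 : Integrable (fun ω => (Real.exp (l * (1 - p)) - Real.exp (l * (0 - p))) *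
      Set.indicator {ω | P ω} (fun _ => (1:ℝ)) ω) μ :=
    ((integrable_const (1:ℝ)).indicator hP).const_mul _
  rw [h0, stmt9_exp_eq, integral_add (integrable_const _) hint2,
    integral_const, integral_const_mul, integral_indicator_const (1:ℝ) hP]
  have h1 : l * (0 - p) = -(l * p) := by ring
  have h2 : l * (1 - p) = l + -(l * p) := by ring
  rw [h1, h2, Real.exp_add]
  simp [← hp, measureReal_def]
  ring

end Aux

/-- With `T ≥ 2` rounds, `B = T` units, independent random perishing times
`Tb b`, `P_{<t} = Σ_b 1{Tb b < t}`, `ν_t = E[P_{<t}] = Σ_b P(Tb b < t)` and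
`B^rand_{<t} = {b : P(Tb b < t) ∈ (0,1)}`: if `ν_t ≤ t − 1` for every `t ∈ {2,…,T}`, then
`P(P_{<t} ≤ t − 1 ∀ t ∈ {2,…,T}) ≥
  1 − Σ_{t=2}^T min{Var(P_{<t})/(t − ν_t)², exp(−2(t − ν_t)²/|B^rand_{<t}|)}·1{B^rand_{<t} ≠ ∅}`;
in particular the process is `δ`-offset-expiring for every `δ` at least this sum. -/
theorem stmt9 {Ω : Type*} [MeasurableSpace Ω] (μ : Measure Ω) [IsProbabilityMeasure μ]
    (T : ℕ) (hT : 2 ≤ T)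
    (Tb : Fin T → Ω → ℕ) (hmeas : ∀ b, Measurable (Tb b)) (hTb1 : ∀ b, ∀ᵐ ω ∂μ, 1 ≤ Tb b ω)
    (hindep : iIndepFun Tb μ)
    (hmean : ∀ t ∈ Finset.Icc 2 T,
      (∑ b : Fin T, (μ {ω | Tb b ω < t}).toReal) ≤ (t : ℝ) - 1) :
    1 - ∑ t ∈ Finset.Icc 2 T,
        (if (Finset.univ.filter
              (fun b : Fin T => (μ {ω | Tb b ω < t}).toReal ∈ Set.Ioo (0 : ℝ) 1)).Nonempty
          then
            min
              (variance (fun ω => ∑ b : Fin T, if Tb b ω < t then (1 : ℝ) else 0) μ /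
                ((t : ℝ) - ∑ b : Fin T, (μ {ω | Tb b ω < t}).toReal) ^ 2)
              (Real.exp (-2 * ((t : ℝ) - ∑ b : Fin T, (μ {ω | Tb b ω < t}).toReal) ^ 2 /
                ((Finset.univ.filter
                  (fun b : Fin T =>
                    (μ {ω | Tb b ω < t}).toReal ∈ Set.Ioo (0 : ℝ) 1)).card : ℝ)))
          else 0)
      ≤ (μ {ω | ∀ s ∈ Finset.Icc 2 T,
          (Finset.univ.filter (fun b : Fin T => Tb b ω < s)).card ≤ s - 1}).toReal := by
  have hA : ∀ (t : ℕ) (b : Fin T), MeasurableSet {ω | Tb b ω < t} := by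
    intro t b
    exact (hmeas b) (MeasurableSpace.measurableSet_top : MeasurableSet {n : ℕ | n < t})
  have hp0 : ∀ (t : ℕ) (b : Fin T), 0 ≤ (μ {ω | Tb b ω < t}).toReal :=
    fun t b => ENNReal.toReal_nonneg
  have hp1 : ∀ (t : ℕ) (b : Fin T), (μ {ω | Tb b ω < t}).toReal ≤ 1 := by
    intro t b
    have := prob_le_one (μ := μ) (s := {ω | Tb b ω < t})
    simpa using ENNReal.toReal_mono (by simp) this
  -- the sum of indicators equals the cardinality
  have hXcard : ∀ (t : ℕ) (ω : Ω),
      (∑ b : Fin T, if Tb b ω < t then (1:ℝ) else 0)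
        = ((Finset.univ.filter (fun b : Fin T => Tb b ω < t)).card : ℝ) := by
    intro t ω
    simp [Finset.sum_boole]
  -- the key per-round bound
  have key : ∀ t ∈ Finset.Icc 2 T,
      (μ {ω | ¬ ((Finset.univ.filter (fun b : Fin T => Tb b ω < t)).card ≤ t - 1)}).toReal ≤
      (if (Finset.univ.filter
              (fun b : Fin T => (μ {ω | Tb b ω < t}).toReal ∈ Set.Ioo (0 : ℝ) 1)).Nonempty
          then
            min
              (variance (fun ω => ∑ b : Fin T, if Tb b ω < t then (1 : ℝ) else 0) μ /
                ((t : ℝ) - ∑ b : Fin T, (μ {ω | Tb b ω < t}).toReal) ^ 2)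
              (Real.exp (-2 * ((t : ℝ) - ∑ b : Fin T, (μ {ω | Tb b ω < t}).toReal) ^ 2 /
                ((Finset.univ.filter
                  (fun b : Fin T =>
                    (μ {ω | Tb b ω < t}).toReal ∈ Set.Ioo (0 : ℝ) 1)).card : ℝ)))
          else 0) := by
    intro t ht
    obtain ⟨ht2, htT⟩ := Finset.mem_Icc.mp ht
    have hν : (∑ b : Fin T, (μ {ω | Tb b ω < t}).toReal) ≤ (t : ℝ) - 1 := hmean t ht
    have ht1 : (1:ℝ) ≤ (t:ℝ) := by exact_mod_cast le_trans (by norm_num) ht2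
    have hc1 : (1:ℝ) ≤ (t : ℝ) - ∑ b : Fin T, (μ {ω | Tb b ω < t}).toReal := by linarith
    have hc0 : (0:ℝ) < (t : ℝ) - ∑ b : Fin T, (μ {ω | Tb b ω < t}).toReal := by linarith
    -- the bad event as a real-threshold event
    have hBset : {ω | ¬ ((Finset.univ.filter (fun b : Fin T => Tb b ω < t)).card ≤ t - 1)}
        = {ω | (t : ℝ) ≤ ∑ b : Fin T, if Tb b ω < t then (1:ℝ) else 0} := by
      ext ω
      simp only [Set.mem_setOf_eq, not_le, hXcard t ω]
      constructor
      · intro h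
        have : t ≤ (Finset.univ.filter (fun b : Fin T => Tb b ω < t)).card := by omega
        exact_mod_cast this
      · intro h
        have : t ≤ (Finset.univ.filter (fun b : Fin T => Tb b ω < t)).card := by exact_mod_cast h
        omega
    by_cases hne : (Finset.univ.filter
        (fun b : Fin T => (μ {ω | Tb b ω < t}).toReal ∈ Set.Ioo (0 : ℝ) 1)).Nonempty
    · rw [if_pos hne]
      -- each indicator as a function
      have hind : ∀ b : Fin T, (fun ω => if Tb b ω < t then (1:ℝ) else 0)
          = Set.indicator {ω | Tb b ω < t} (fun _ => (1:ℝ)) := by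
        intro b; funext ω
        by_cases h : Tb b ω < t <;>
          simp [h, Set.indicator_of_mem, Set.indicator_of_notMem, Set.mem_setOf_eq]
      have hmemℒp : MemLp (fun ω => ∑ b : Fin T, if Tb b ω < t then (1:ℝ) else 0) 2 μ := by
        have := memLp_finset_sum' (μ := μ) (p := 2) Finset.univ
          (f := fun b : Fin T => fun ω => if Tb b ω < t then (1:ℝ) else 0)
          (fun b _ => by
            show MemLp (fun ω => if Tb b ω < t then (1:ℝ) else 0) 2 μ
            rw [hind b]
            exact memLp_indicator_const 2 (hA t b) (1:ℝ) (Or.inr (measure_ne_top μ _)))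
        convert this using 1
        funext ω
        simp
      have hint : ∀ b : Fin T, Integrable (fun ω => if Tb b ω < t then (1:ℝ) else 0) μ := by
        intro b
        rw [hind b]
        exact (integrable_const (1:ℝ)).indicator (hA t b)
      have hEX : μ[fun ω => ∑ b : Fin T, if Tb b ω < t then (1:ℝ) else 0]
          = ∑ b : Fin T, (μ {ω | Tb b ω < t}).toReal := by
        rw [integral_finset_sum _ (fun b _ => hint b)]
        refine Finset.sum_congr rfl (fun b _ => ?_)
        rw [hind b, integral_indicator_const (1:ℝ) (hA t b)]
        simp [measureReal_def]
      apply le_min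
      -- Chebyshev branch
      · have cheb := meas_ge_le_variance_div_sq (μ := μ) hmemℒp hc0
        have hsub : {ω | ¬ ((Finset.univ.filter (fun b : Fin T => Tb b ω < t)).card ≤ t - 1)}
            ⊆ {ω | ((t : ℝ) - ∑ b : Fin T, (μ {ω | Tb b ω < t}).toReal) ≤
                |(∑ b : Fin T, if Tb b ω < t then (1:ℝ) else 0) -
                  μ[fun ω => ∑ b : Fin T, if Tb b ω < t then (1:ℝ) else 0]|} := by
          rw [hBset]
          intro ω hω
          simp only [Set.mem_setOf_eq] at hω ⊢
          rw [hEX]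
          have : ((t : ℝ) - ∑ b : Fin T, (μ {ω | Tb b ω < t}).toReal) ≤
              (∑ b : Fin T, if Tb b ω < t then (1:ℝ) else 0) -
                ∑ b : Fin T, (μ {ω | Tb b ω < t}).toReal := by linarith
          exact this.trans (le_abs_self _)
        calc (μ {ω | ¬ ((Finset.univ.filter (fun b : Fin T => Tb b ω < t)).card ≤ t - 1)}).toReal
            ≤ (ENNReal.ofReal
                (variance (fun ω => ∑ b : Fin T, if Tb b ω < t then (1:ℝ) else 0) μ /
                  ((t : ℝ) - ∑ b : Fin T, (μ {ω | Tb b ω < t}).toReal) ^ 2)).toReal := by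
              apply ENNReal.toReal_mono ENNReal.ofReal_ne_top
              exact le_trans (measure_mono hsub) cheb
          _ = _ := ENNReal.toReal_ofReal
              (div_nonneg (variance_nonneg _ _) (by positivity))
      -- Hoeffding branch
      · set F := (Finset.univ.filter
            (fun b : Fin T => (μ {ω | Tb b ω < t}).toReal ∈ Set.Ioo (0 : ℝ) 1)) with hF
        have hn : 0 < (F.card : ℝ) := by exact_mod_cast Finset.card_pos.mpr hne
        set c := (t : ℝ) - ∑ b : Fin T, (μ {ω | Tb b ω < t}).toReal with hcdef
        set l := 4 * c / (F.card : ℝ) with hl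
        have hl0 : 0 ≤ l := by positivity
        set Y : Fin T → Ω → ℝ :=
          fun b ω => (if Tb b ω < t then (1:ℝ) else 0) - (μ {ω | Tb b ω < t}).toReal with hY
        have hYmeas : ∀ b, Measurable (Y b) := by
          intro b
          exact (Measurable.ite (hA t b) measurable_const measurable_const).sub measurable_const
        have hYindep : iIndepFun Y μ := by
          have := hindep.comp
            (fun b (n : ℕ) => (if n < t then (1:ℝ) else 0) - (μ {ω | Tb b ω < t}).toReal)
            (fun b => measurable_of_countable _)
          exact this
        have hYint : ∀ b : Fin T, Integrable (fun ω => Real.exp (l * Y b ω)) μ := by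
          intro b
          exact stmt9_integrable μ (fun ω => Tb b ω < t) (hA t b)
            (μ {ω | Tb b ω < t}).toReal l
        have hYmgf : ∀ b : Fin T, mgf (Y b) μ l
            = Real.exp (-(l * (μ {ω | Tb b ω < t}).toReal)) *
              (1 - (μ {ω | Tb b ω < t}).toReal +
                (μ {ω | Tb b ω < t}).toReal * Real.exp l) := by
          intro b
          exact stmt9_mgf μ (fun ω => Tb b ω < t) (hA t b) l
        have hmgfbound : ∀ b : Fin T, mgf (Y b) μ l
            ≤ (if b ∈ F then Real.exp (l ^ 2 / 8) else 1) := by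
          intro b
          rw [hYmgf b]
          by_cases hbF : b ∈ F
          · rw [if_pos hbF]
            have hb := stmt9_bern_bound (hp0 t b) (hp1 t b) hl0
            calc Real.exp (-(l * (μ {ω | Tb b ω < t}).toReal)) *
                  (1 - (μ {ω | Tb b ω < t}).toReal + (μ {ω | Tb b ω < t}).toReal * Real.exp l)
                ≤ Real.exp (-(l * (μ {ω | Tb b ω < t}).toReal)) *
                  Real.exp (l * (μ {ω | Tb b ω < t}).toReal + l ^ 2 / 8) := by
                  exact mul_le_mul_of_nonneg_left hb (Real.exp_pos _).le
              _ = Real.exp (l ^ 2 / 8) := by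
                  rw [← Real.exp_add]; congr 1; ring
          · rw [if_neg hbF]
            have : (μ {ω | Tb b ω < t}).toReal = 0 ∨ (μ {ω | Tb b ω < t}).toReal = 1 := by
              have hnot : ¬ ((μ {ω | Tb b ω < t}).toReal ∈ Set.Ioo (0:ℝ) 1) := by
                intro hmem
                exact hbF (Finset.mem_filter.mpr ⟨Finset.mem_univ b, hmem⟩)
              simp only [Set.mem_Ioo, not_and_or, not_lt] at hnot
              rcases hnot with h | h
              · left; linarith [hp0 t b]
              · right; linarith [hp1 t b]
            rcases this with h | h <;> rw [h] <;> simp [← Real.exp_add]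
        -- mgf of the sum
        have hmgfsum : mgf (∑ b : Fin T, Y b) μ l
            = ∏ b : Fin T, mgf (Y b) μ l := hYindep.mgf_sum hYmeas Finset.univ
        have hprodbound : ∏ b : Fin T, mgf (Y b) μ l
            ≤ Real.exp (l ^ 2 / 8) ^ F.card := by
          calc ∏ b : Fin T, mgf (Y b) μ l
              ≤ ∏ b : Fin T, (if b ∈ F then Real.exp (l ^ 2 / 8) else 1) :=
                Finset.prod_le_prod (fun b _ => mgf_nonneg) (fun b _ => hmgfbound b)
            _ = ∏ b ∈ F, Real.exp (l ^ 2 / 8) := Fintype.prod_ite_mem F _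
            _ = Real.exp (l ^ 2 / 8) ^ F.card := Finset.prod_const _
        have hintsum : Integrable (fun ω => Real.exp (l * (∑ b : Fin T, Y b) ω)) μ :=
          hYindep.integrable_exp_mul_sum hYmeas (fun b _ => hYint b)
        have chern := measure_ge_le_exp_mul_mgf (μ := μ) (X := ∑ b : Fin T, Y b) c hl0 hintsum
        have hsub2 : {ω | ¬ ((Finset.univ.filter (fun b : Fin T => Tb b ω < t)).card ≤ t - 1)}
            ⊆ {ω | c ≤ (∑ b : Fin T, Y b) ω} := by
          rw [hBset]
          intro ω hω
          simp only [Set.mem_setOf_eq] at hω ⊢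
          have hYapp : (∑ b : Fin T, Y b) ω
              = (∑ b : Fin T, if Tb b ω < t then (1:ℝ) else 0)
                - ∑ b : Fin T, (μ {ω | Tb b ω < t}).toReal := by
            simp [hY, Finset.sum_sub_distrib]
          rw [hYapp, hcdef]
          linarith
        have hfinal : Real.exp (-l * c) * Real.exp (l ^ 2 / 8) ^ F.card
            = Real.exp (-2 * c ^ 2 / (F.card : ℝ)) := by
          rw [← Real.exp_nat_mul, ← Real.exp_add]
          congr 1
          rw [hl]
          field_simp
          ring
        calc (μ {ω | ¬ ((Finset.univ.filter (fun b : Fin T => Tb b ω < t)).card ≤ t - 1)}).toReal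
            ≤ (μ {ω | c ≤ (∑ b : Fin T, Y b) ω}).toReal := by
              apply ENNReal.toReal_mono (measure_ne_top μ _)
              exact measure_mono hsub2
          _ ≤ Real.exp (-l * c) * mgf (∑ b : Fin T, Y b) μ l := chern
          _ ≤ Real.exp (-l * c) * (Real.exp (l ^ 2 / 8) ^ F.card) := by
              apply mul_le_mul_of_nonneg_left _ (Real.exp_pos _).le
              rw [hmgfsum]; exact hprodbound
          _ = Real.exp (-2 * c ^ 2 / (F.card : ℝ)) := hfinal
    · rw [if_neg hne]
      -- degenerate case: the bad event is null
      have hdeg : ∀ b : Fin T,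
          (μ {ω | Tb b ω < t}).toReal = 0 ∨ (μ {ω | Tb b ω < t}).toReal = 1 := by
        intro b
        have hnot : ¬ ((μ {ω | Tb b ω < t}).toReal ∈ Set.Ioo (0:ℝ) 1) := by
          intro hmem
          exact hne ⟨b, Finset.mem_filter.mpr ⟨Finset.mem_univ b, hmem⟩⟩
        simp only [Set.mem_Ioo, not_and_or, not_lt] at hnot
        rcases hnot with h | h
        · left; linarith [hp0 t b]
        · right; linarith [hp1 t b]
      have hae : ∀ᵐ ω ∂μ, ∀ b : Fin T,
          (if Tb b ω < t then (1:ℝ) else 0) = (μ {ω | Tb b ω < t}).toReal := by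
        rw [MeasureTheory.ae_all_iff]
        intro b
        rcases hdeg b with h | h
        · have h0 : μ {ω | Tb b ω < t} = 0 := by
            rcases (ENNReal.toReal_eq_zero_iff _).mp h with h' | h'
            · exact h'
            · exact absurd h' (measure_ne_top μ _)
          have := measure_eq_zero_iff_ae_notMem.mp h0
          filter_upwards [this] with ω hω
          rw [h, if_neg hω]
        · have h1 : μ {ω | Tb b ω < t} = 1 := (ENNReal.toReal_eq_one_iff _).mp h
          have hcompl : μ {ω | Tb b ω < t}ᶜ = 0 := by
            rw [prob_compl_eq_one_sub (hA t b), h1, tsub_self]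
          have := measure_eq_zero_iff_ae_notMem.mp hcompl
          filter_upwards [this] with ω hω
          have : Tb b ω < t := by simpa using hω
          rw [h, if_pos this]
      have hgood : ∀ᵐ ω ∂μ,
          (Finset.univ.filter (fun b : Fin T => Tb b ω < t)).card ≤ t - 1 := by
        have hν := hmean t ht
        filter_upwards [hae] with ω hω
        have hsum : (∑ b : Fin T, if Tb b ω < t then (1:ℝ) else 0)
            = ∑ b : Fin T, (μ {ω | Tb b ω < t}).toReal := Finset.sum_congr rfl fun b _ => hω b
        have hle : ((Finset.univ.filter (fun b : Fin T => Tb b ω < t)).card : ℝ)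
            ≤ ((t - 1 : ℕ) : ℝ) := by
          rw [← hXcard t ω, hsum]
          have : ((t - 1 : ℕ) : ℝ) = (t : ℝ) - 1 := by
            have : 1 ≤ t := by omega
            push_cast [this]
            ring
          rw [this]
          exact hν
        exact_mod_cast hle
      have : μ {ω | ¬ ((Finset.univ.filter (fun b : Fin T => Tb b ω < t)).card ≤ t - 1)} = 0 :=
        MeasureTheory.ae_iff.mp hgood
      rw [this]
      simp
  -- assemble via union bound
  set G := {ω | ∀ s ∈ Finset.Icc 2 T,
      (Finset.univ.filter (fun b : Fin T => Tb b ω < s)).card ≤ s - 1} with hG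
  have hmeasCard : ∀ s : ℕ, Measurable
      (fun ω => (Finset.univ.filter (fun b : Fin T => Tb b ω < s)).card) := by
    intro s
    have : (fun ω => (Finset.univ.filter (fun b : Fin T => Tb b ω < s)).card)
        = fun ω => ∑ b : Fin T, if Tb b ω < s then 1 else 0 := by
      funext ω
      rw [Finset.card_filter]
    rw [this]
    exact Finset.measurable_sum _ fun b _ =>
      Measurable.ite (hA s b) measurable_const measurable_const
  have hsetmeas : ∀ s : ℕ, MeasurableSet
      {ω | ¬ ((Finset.univ.filter (fun b : Fin T => Tb b ω < s)).card ≤ s - 1)} := by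
    intro s
    exact ((hmeasCard s) (MeasurableSpace.measurableSet_top :
      MeasurableSet {n : ℕ | ¬ (n ≤ s - 1)}))
  have hGmeas : MeasurableSet G := by
    have : G = ⋂ s ∈ Finset.Icc 2 T,
        {ω | (Finset.univ.filter (fun b : Fin T => Tb b ω < s)).card ≤ s - 1} := by
      ext ω
      simp [hG, Set.mem_iInter]
    rw [this]
    exact MeasurableSet.biInter (Finset.Icc 2 T).countable_toSet
      (fun s _ => (hmeasCard s) (MeasurableSpace.measurableSet_top :
        MeasurableSet {n : ℕ | n ≤ s - 1}))
  have hGc : Gᶜ = ⋃ s ∈ Finset.Icc 2 T,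
      {ω | ¬ ((Finset.univ.filter (fun b : Fin T => Tb b ω < s)).card ≤ s - 1)} := by
    ext ω
    simp [hG, Set.mem_iUnion, not_forall]
    tauto
  have hGcle : (μ Gᶜ).toReal ≤ ∑ s ∈ Finset.Icc 2 T,
      (μ {ω | ¬ ((Finset.univ.filter (fun b : Fin T => Tb b ω < s)).card ≤ s - 1)}).toReal := by
    rw [hGc]
    calc (μ (⋃ s ∈ Finset.Icc 2 T,
          {ω | ¬ ((Finset.univ.filter (fun b : Fin T => Tb b ω < s)).card ≤ s - 1)})).toReal
        ≤ (∑ s ∈ Finset.Icc 2 T,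
            μ {ω | ¬ ((Finset.univ.filter (fun b : Fin T => Tb b ω < s)).card ≤ s - 1)}).toReal := by
          apply ENNReal.toReal_mono
          · exact (ENNReal.sum_lt_top.mpr fun s _ => measure_lt_top μ _).ne
          · exact measure_biUnion_finset_le _ _
      _ = _ := ENNReal.toReal_sum fun s _ => measure_ne_top μ _
  have hsum_le : ∑ s ∈ Finset.Icc 2 T,
      (μ {ω | ¬ ((Finset.univ.filter (fun b : Fin T => Tb b ω < s)).card ≤ s - 1)}).toReal
      ≤ ∑ t ∈ Finset.Icc 2 T,
        (if (Finset.univ.filter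
              (fun b : Fin T => (μ {ω | Tb b ω < t}).toReal ∈ Set.Ioo (0 : ℝ) 1)).Nonempty
          then
            min
              (variance (fun ω => ∑ b : Fin T, if Tb b ω < t then (1 : ℝ) else 0) μ /
                ((t : ℝ) - ∑ b : Fin T, (μ {ω | Tb b ω < t}).toReal) ^ 2)
              (Real.exp (-2 * ((t : ℝ) - ∑ b : Fin T, (μ {ω | Tb b ω < t}).toReal) ^ 2 /
                ((Finset.univ.filter
                  (fun b : Fin T =>
                    (μ {ω | Tb b ω < t}).toReal ∈ Set.Ioo (0 : ℝ) 1)).card : ℝ)))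
          else 0) := Finset.sum_le_sum key
  have hadd : (μ G).toReal + (μ Gᶜ).toReal = 1 := by
    have := measure_add_measure_compl (μ := μ) hGmeas
    rw [measure_univ] at this
    have h2 := congrArg ENNReal.toReal this
    rw [ENNReal.toReal_add (measure_ne_top μ _) (measure_ne_top μ _)] at h2
    simpa using h2
  linarith
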